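/- arXiv:1807.04474 — 3 statements merged into one kernel-verified Lean document; each statement's English description precedes it below -/
import Mathlib

section
/- Let (x^k) be generated by the augmented Lagrangian method (Algorithm 3.1) applied to the partially penalized GNEP, under Assumption 3.2 with ε_k → 0 and ε'_k → 0, and let x̄ be a limit point of (x^k) along a subsequence K ⊆ ℕ. If x̄ is feasible (g^ν(x̄) ≤ 0 and h^ν(x̄) ≤ 0 for all ν), then for every player ν: ∇_{x^ν}θ_ν(x^k) + ∇_{x^ν}g^ν(x^k) λ^{ν,k} + ∇_{x^ν}h^ν(x^k) μ^{ν,k} → 0, min{−g^ν(x^k), λ^{ν,k}} → 0, and min{−h^ν(x^k), μ^{ν,k}} → 0, all along k ∈ K. -/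
open Filter Topology Finset Function RealInnerProductSpace

/-- The strategy space of a GNEP: one Euclidean block per player. -/
abbrev Strat {N : ℕ} (n : Fin N → ℕ) := (ν : Fin N) → EuclideanSpace ℝ (Fin (n ν))

/-- Partial gradient of `f : Strat n → ℝ` with respect to player `ν`'s block at `x`. -/
noncomputable def pgrad {N : ℕ} {n : Fin N → ℕ} (ν : Fin N)
    (f : Strat n → ℝ) (x : Strat n) : EuclideanSpace ℝ (Fin (n ν)) :=
  gradient (fun z => f (Function.update x ν z)) (x ν)

/-- Positive linear dependence of a family on a finite index set. -/
def PosLinDep {ι E : Type*} [AddCommGroup E] [Module ℝ E]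
    (s : Finset ι) (v : ι → E) : Prop :=
  ∃ a : ι → ℝ, (∀ i, 0 ≤ a i) ∧ (∃ i ∈ s, a i ≠ 0) ∧ ∑ i ∈ s, a i • v i = 0

/-- Linear dependence of a family on a finite index set. -/
def LinDep {ι E : Type*} [AddCommGroup E] [Module ℝ E]
    (s : Finset ι) (v : ι → E) : Prop :=
  ∃ a : ι → ℝ, (∃ i ∈ s, a i ≠ 0) ∧ ∑ i ∈ s, a i • v i = 0

/-- CPLD with respect to player `ν`. -/
def CPLDnu {N : ℕ} {n : Fin N → ℕ} {ι : Type*} (ν : Fin N)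
    (c : ι → Strat n → ℝ) (x : Strat n) : Prop :=
  ∀ I : Finset ι, (∀ i ∈ I, c i x = 0) →
    PosLinDep I (fun i => pgrad ν (c i) x) →
    ∃ U ∈ 𝓝 x, ∀ y ∈ U, LinDep I (fun i => pgrad ν (c i) y)

/-- EMFCQ with respect to player `ν`. -/
def EMFCQnu {N : ℕ} {n : Fin N → ℕ} {ι : Type*} (ν : Fin N)
    (c : ι → Strat n → ℝ) (x : Strat n) : Prop :=
  ∃ d : EuclideanSpace ℝ (Fin (n ν)), ∀ i, 0 ≤ c i x → inner (𝕜 := ℝ) (pgrad ν (c i) x) d < 0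


/-- A component is bounded by the Euclidean norm of the whole vector. -/
lemma abs_le_sqrt_sum {ι : Type*} [Fintype ι] (f : ι → ℝ) (i : ι) :
    |f i| ≤ Real.sqrt (∑ j, f j ^ 2) := by
  rw [← Real.sqrt_sq_eq_abs]
  exact Real.sqrt_le_sqrt (Finset.single_le_sum (fun j _ => sq_nonneg (f j)) (Finset.mem_univ i))

/-- Geometric decay: if eventually `f (k+1) ≤ r * f k` with `0 ≤ f` and `0 ≤ r < 1`,
then `f → 0`. -/
lemma geom_decay {f : ℕ → ℝ} {r : ℝ} (hr0 : 0 ≤ r) (hr1 : r < 1)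
    (hf0 : ∀ k, 0 ≤ f k) {K : ℕ} (hdec : ∀ k, K ≤ k → f (k+1) ≤ r * f k) :
    Tendsto f atTop (𝓝 0) := by
  have key : ∀ m : ℕ, f (K + m) ≤ r ^ m * f K := by
    intro m
    induction m with
    | zero => simp
    | succ m ih =>
      have h1 : f ((K + m) + 1) ≤ r * f (K + m) := hdec (K + m) (Nat.le_add_right _ _)
      calc f (K + (m+1)) = f ((K + m) + 1) := rfl
        _ ≤ r * f (K + m) := h1
        _ ≤ r * (r ^ m * f K) := mul_le_mul_of_nonneg_left ih hr0
        _ = r ^ (m+1) * f K := by ring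
  have hlim : Tendsto (fun m => r ^ m * f K) atTop (𝓝 0) := by
    simpa using (tendsto_pow_atTop_nhds_zero_of_lt_one hr0 hr1).mul_const (f K)
  have h2 : Tendsto (fun m => f (m + K)) atTop (𝓝 0) := by
    apply squeeze_zero (fun t => hf0 _) (fun t => ?_) hlim
    rw [Nat.add_comm]
    exact key t
  exact (tendsto_add_atTop_iff_nat K).mp h2

/-- If `0 ≤ b` then `|min a b| ≤ |a|`. -/
lemma abs_min_le_abs_left {a b : ℝ} (hb : 0 ≤ b) : |min a b| ≤ |a| := by
  rcases le_total a b with hab | hab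
  · rw [min_eq_left hab]
  · rw [min_eq_right hab, abs_of_nonneg hb]
    exact hab.trans (le_abs_self a)

/-- **Lemma 4.5.** If a subsequence of the augmented Lagrangian iterates
converges to a feasible point, then the approximate KKT conditions of the original GNEP hold
along this subsequence. -/
theorem stmt13 {N : ℕ} {n m p : Fin N → ℕ}
    (θ : Fin N → Strat n → ℝ)
    (g : (ν : Fin N) → Fin (m ν) → Strat n → ℝ)
    (h : (ν : Fin N) → Fin (p ν) → Strat n → ℝ)
    (hθ : ∀ ν, ContDiff ℝ 1 (θ ν))
    (hg : ∀ ν i, ContDiff ℝ 1 (g ν i))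
    (hh : ∀ ν j, ContDiff ℝ 1 (h ν j))
    (x : ℕ → Strat n)
    (lam : (k : ℕ) → (ν : Fin N) → Fin (m ν) → ℝ)
    (mu : (k : ℕ) → (ν : Fin N) → Fin (p ν) → ℝ)
    (u : (k : ℕ) → (ν : Fin N) → Fin (m ν) → ℝ)
    (rho : ℕ → Fin N → ℝ)
    (umax : ℝ) (τ γ : Fin N → ℝ)
    (humax : 0 ≤ umax)
    (hτ : ∀ ν, τ ν ∈ Set.Ioo (0:ℝ) 1)
    (hγ : ∀ ν, 1 < γ ν)
    (hrho0 : ∀ ν, 0 < rho 0 ν)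
    (hu0 : ∀ ν i, u 0 ν i ∈ Set.Icc 0 umax)
    (hlam : ∀ k ν i, lam (k+1) ν i = max (u k ν i + rho k ν * g ν i (x (k+1))) 0)
    (hu : ∀ k ν i, u (k+1) ν i = min (lam (k+1) ν i) umax)
    (hrho : ∀ k ν,
      (Real.sqrt (∑ i, (min (-(g ν i (x (k+1)))) (lam (k+1) ν i)) ^ 2) ≤
          τ ν * Real.sqrt (∑ i, (min (-(g ν i (x k))) (lam k ν i)) ^ 2) →
        rho (k+1) ν = rho k ν) ∧
      (¬ (Real.sqrt (∑ i, (min (-(g ν i (x (k+1)))) (lam (k+1) ν i)) ^ 2) ≤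
          τ ν * Real.sqrt (∑ i, (min (-(g ν i (x k))) (lam k ν i)) ^ 2)) →
        rho (k+1) ν = γ ν * rho k ν))
    (eps eps' : ℕ → ℝ)
    (heps0 : ∀ k, 0 ≤ eps k)
    (heps'0 : ∀ k, 0 ≤ eps' k)
    (heps' : Tendsto eps' atTop (𝓝 0))
    (hA1 : ∀ k ν, ‖pgrad ν (θ ν) (x (k+1))
        + ∑ i, max (u k ν i + rho k ν * g ν i (x (k+1))) 0 • pgrad ν (g ν i) (x (k+1))
        + ∑ j, mu (k+1) ν j • pgrad ν (h ν j) (x (k+1))‖ ≤ eps k)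
    (hA2 : ∀ k ν, Real.sqrt (∑ j, (min (-(h ν j (x (k+1)))) (mu (k+1) ν j)) ^ 2) ≤ eps' k)
    (heps : Tendsto eps atTop (𝓝 0))
    (φ : ℕ → ℕ) (hφ : StrictMono φ) (xbar : Strat n)
    (hxconv : Tendsto (fun k => x (φ k)) atTop (𝓝 xbar))
    (hfeasg : ∀ ν i, g ν i xbar ≤ 0)
    (hfeash : ∀ ν j, h ν j xbar ≤ 0) :
    ∀ ν,
      Tendsto (fun k => pgrad ν (θ ν) (x (φ k))
          + ∑ i, lam (φ k) ν i • pgrad ν (g ν i) (x (φ k))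
          + ∑ j, mu (φ k) ν j • pgrad ν (h ν j) (x (φ k))) atTop (𝓝 0) ∧
      (∀ i, Tendsto (fun k => min (-(g ν i (x (φ k)))) (lam (φ k) ν i)) atTop (𝓝 0)) ∧
      (∀ j, Tendsto (fun k => min (-(h ν j (x (φ k)))) (mu (φ k) ν j)) atTop (𝓝 0)) := by
  intro ν
  -- basic facts
  have hφle : ∀ k, k ≤ φ k := fun k => hφ.le_apply
  have hφk1 : ∀ᶠ k in atTop, 1 ≤ φ k :=
    eventually_atTop.2 ⟨1, fun k hk => hk.trans (hφle k)⟩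
  have htend1 : Tendsto (fun k => φ k - 1) atTop atTop :=
    (tendsto_sub_atTop_nat 1).comp hφ.tendsto_atTop
  have hlamnn : ∀ k i', 0 ≤ lam (k+1) ν i' := by
    intro k i'; rw [hlam]; exact le_max_right _ _
  have hubd : ∀ k i', 0 ≤ u k ν i' ∧ u k ν i' ≤ umax := by
    intro k
    induction k with
    | zero => exact fun i' => ⟨(hu0 ν i').1, (hu0 ν i').2⟩
    | succ k ih =>
      intro i'
      rw [hu k ν i']
      exact ⟨le_min (hlamnn k i') humax, min_le_right _ _⟩
  have hrhopos : ∀ k, 0 < rho k ν := by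
    intro k
    induction k with
    | zero => exact hrho0 ν
    | succ k ih =>
      by_cases hc : Real.sqrt (∑ i, (min (-(g ν i (x (k+1)))) (lam (k+1) ν i)) ^ 2) ≤
          τ ν * Real.sqrt (∑ i, (min (-(g ν i (x k))) (lam k ν i)) ^ 2)
      · rw [(hrho k ν).1 hc]; exact ih
      · rw [(hrho k ν).2 hc]; exact mul_pos (lt_trans one_pos (hγ ν)) ih
  have hrhomono : Monotone (fun k => rho k ν) := by
    apply monotone_nat_of_le_succ
    intro k
    by_cases hc : Real.sqrt (∑ i, (min (-(g ν i (x (k+1)))) (lam (k+1) ν i)) ^ 2) ≤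
        τ ν * Real.sqrt (∑ i, (min (-(g ν i (x k))) (lam k ν i)) ^ 2)
    · rw [(hrho k ν).1 hc]
    · rw [(hrho k ν).2 hc]
      exact le_mul_of_one_le_left (hrhopos k).le (hγ ν).le
  refine ⟨?_, ?_, ?_⟩
  · -- first part: approximate stationarity
    apply squeeze_zero_norm' (a := fun k => eps (φ k - 1))
    · filter_upwards [hφk1] with k hk
      obtain ⟨k', hk'⟩ : ∃ k', φ k = k' + 1 := ⟨φ k - 1, (Nat.succ_pred_eq_of_pos hk).symm⟩
      rw [hk', Nat.add_sub_cancel]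
      simp only [hlam]
      exact hA1 k' ν
    · exact heps.comp htend1
  · -- second part: complementarity for g
    intro i
    have hgc : Tendsto (fun k => g ν i (x (φ k))) atTop (𝓝 (g ν i xbar)) :=
      ((hg ν i).continuous.tendsto xbar).comp hxconv
    rcases (hfeasg ν i).lt_or_eq with hlt | heq
    · -- g ν i xbar < 0
      by_cases hcase : ∃ K : ℕ, ∀ k, K ≤ k →
          Real.sqrt (∑ i, (min (-(g ν i (x (k+1)))) (lam (k+1) ν i)) ^ 2) ≤
            τ ν * Real.sqrt (∑ i, (min (-(g ν i (x k))) (lam k ν i)) ^ 2)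
      · -- penalty parameter stays bounded: geometric decay of the whole residual
        obtain ⟨K, hK⟩ := hcase
        have hV : Tendsto
            (fun k => Real.sqrt (∑ i, (min (-(g ν i (x k))) (lam k ν i)) ^ 2))
            atTop (𝓝 0) :=
          geom_decay (hτ ν).1.le (hτ ν).2 (fun k => Real.sqrt_nonneg _) hK
        apply squeeze_zero_norm
          (a := fun k => Real.sqrt (∑ i', (min (-(g ν i' (x (φ k)))) (lam (φ k) ν i')) ^ 2))
        · intro k
          rw [Real.norm_eq_abs]
          exact abs_le_sqrt_sum (fun i' => min (-(g ν i' (x (φ k)))) (lam (φ k) ν i')) i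
        · exact hV.comp hφ.tendsto_atTop
      · -- penalty parameter diverges
        push_neg at hcase
        have hgpos : (0:ℝ) < γ ν := lt_trans one_pos (hγ ν)
        have hpow : ∀ j : ℕ, ∃ k, (γ ν) ^ j * rho 0 ν ≤ rho k ν := by
          intro j
          induction j with
          | zero => exact ⟨0, by simp⟩
          | succ j ih =>
            obtain ⟨k, hk⟩ := ih
            obtain ⟨k', hk'le, hk'⟩ := hcase k
            refine ⟨k' + 1, ?_⟩
            rw [(hrho k' ν).2 (not_le.mpr hk')]
            have h1 : rho k ν ≤ rho k' ν := hrhomono hk'le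
            calc (γ ν) ^ (j+1) * rho 0 ν = γ ν * ((γ ν) ^ j * rho 0 ν) := by ring
              _ ≤ γ ν * rho k ν := mul_le_mul_of_nonneg_left hk hgpos.le
              _ ≤ γ ν * rho k' ν := mul_le_mul_of_nonneg_left h1 hgpos.le
        have hrhotop : Tendsto (fun k => rho k ν) atTop atTop := by
          apply tendsto_atTop_atTop_of_monotone hrhomono
          intro b
          have hp : Tendsto (fun j : ℕ => (γ ν) ^ j * rho 0 ν) atTop atTop :=
            Tendsto.atTop_mul_const (hrho0 ν) (tendsto_pow_atTop_atTop_of_one_lt (hγ ν))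
          obtain ⟨j, hj⟩ := (hp.eventually_ge_atTop b).exists
          obtain ⟨k, hk⟩ := hpow j
          exact ⟨k, hj.trans hk⟩
        have hrhotop' : Tendsto (fun k => rho (φ k - 1) ν) atTop atTop :=
          hrhotop.comp htend1
        have hc2 : g ν i xbar < g ν i xbar / 2 := by linarith
        have hev1 : ∀ᶠ k in atTop, g ν i (x (φ k)) < g ν i xbar / 2 :=
          hgc.eventually_lt_const hc2
        have hT : Tendsto (fun k => umax + rho (φ k - 1) ν * (g ν i xbar / 2)) atTop atBot := by
          have h1 : Tendsto (fun k => rho (φ k - 1) ν * (g ν i xbar / 2)) atTop atBot :=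
            Tendsto.atTop_mul_const_of_neg (by linarith) hrhotop'
          exact tendsto_atBot_add_const_left atTop umax h1
        have hev2 : ∀ᶠ k in atTop, umax + rho (φ k - 1) ν * (g ν i xbar / 2) < 0 :=
          hT.eventually_lt_atBot 0
        have hzero : ∀ᶠ k in atTop,
            min (-(g ν i (x (φ k)))) (lam (φ k) ν i) = 0 := by
          filter_upwards [hφk1, hev1, hev2] with k hk h1 h2
          obtain ⟨k', hk'⟩ : ∃ k', φ k = k' + 1 := ⟨φ k - 1, (Nat.succ_pred_eq_of_pos hk).symm⟩
          have hk'' : φ k - 1 = k' := by omega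
          rw [hk''] at h2
          have hgk : g ν i (x (k' + 1)) < g ν i xbar / 2 := by rw [← hk']; exact h1
          have hlam0 : lam (φ k) ν i = 0 := by
            rw [hk', hlam]
            apply max_eq_right
            have hu' := (hubd k' i).2
            have hm : rho k' ν * g ν i (x (k'+1)) ≤ rho k' ν * (g ν i xbar / 2) :=
              mul_le_mul_of_nonneg_left hgk.le (hrhopos k').le
            linarith
          rw [hlam0]
          apply min_eq_right
          rw [hk']
          nlinarith [hgk, hlt]
        exact Filter.Tendsto.congr' (EventuallyEq.symm hzero) tendsto_const_nhds
    · -- g ν i xbar = 0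
      apply squeeze_zero_norm' (a := fun k => |g ν i (x (φ k))|)
      · filter_upwards [hφk1] with k hk
        obtain ⟨k', hk'⟩ : ∃ k', φ k = k' + 1 := ⟨φ k - 1, (Nat.succ_pred_eq_of_pos hk).symm⟩
        have h1 : 0 ≤ lam (φ k) ν i := by rw [hk']; exact hlamnn k' i
        rw [Real.norm_eq_abs]
        calc |min (-(g ν i (x (φ k)))) (lam (φ k) ν i)| ≤ |(-(g ν i (x (φ k))))| :=
              abs_min_le_abs_left h1
          _ = |g ν i (x (φ k))| := abs_neg _
      · have habs : Tendsto (fun k => |g ν i (x (φ k))|) atTop (𝓝 |g ν i xbar|) := hgc.abs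
        rw [heq, abs_zero] at habs
        exact habs
  · -- third part: complementarity for h
    intro j
    apply squeeze_zero_norm' (a := fun k => eps' (φ k - 1))
    · filter_upwards [hφk1] with k hk
      obtain ⟨k', hk'⟩ : ∃ k', φ k = k' + 1 := ⟨φ k - 1, (Nat.succ_pred_eq_of_pos hk).symm⟩
      rw [hk', Nat.add_sub_cancel, Real.norm_eq_abs]
      calc |min (-(h ν j (x (k'+1)))) (mu (k'+1) ν j)|
          ≤ Real.sqrt (∑ j', (min (-(h ν j' (x (k'+1)))) (mu (k'+1) ν j')) ^ 2) :=
            abs_le_sqrt_sum (fun j' => min (-(h ν j' (x (k'+1)))) (mu (k'+1) ν j')) j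
        _ ≤ eps' k' := hA2 k' ν
    · exact heps'.comp htend1
end

section
/- Let (x^k) be generated by the augmented Lagrangian method (Algorithm 3.1) applied to the partially penalized GNEP, under Assumption 3.2 with ε_k → 0 and ε'_k → 0, and let x̄ be a limit point of (x^k). If x̄ is feasible for the GNEP and GNEP-CPLD holds at x̄ for the combined constraints c^ν = (g^ν, h^ν), then x̄ is a KKT point of the GNEP. -/
open Filter Topology Finset Function RealInnerProductSpace

/-! ### Auxiliary lemmas -/

lemma not_linDep_of_linearIndependent {ι E : Type*} [AddCommGroup E] [Module ℝ E]
    (s : Finset ι) (v : ι → E) (h : LinearIndependent ℝ (fun i : s => v i)) :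
    ¬ LinDep s v := by
  rintro ⟨a, ⟨i₀, hi₀, ha⟩, hsum⟩
  refine ha (Fintype.linearIndependent_iff.mp h (fun i => a i) ?_ ⟨i₀, hi₀⟩)
  rw [Finset.sum_coe_sort s (fun i => a i • v i)]
  exact hsum

/-- Conic Carathéodory: a nonnegative combination can be rewritten as a nonnegative
combination over a subset on which the vectors are linearly independent. -/
lemma carath_aux {ι : Type*} [DecidableEq ι] {E : Type*} [AddCommGroup E] [Module ℝ E]
    (v : ι → E) : ∀ (Nb : ℕ) (s : Finset ι), s.card ≤ Nb → ∀ t : ι → ℝ, (∀ i, 0 ≤ t i) →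
    ∃ (s' : Finset ι) (t' : ι → ℝ), s' ⊆ s ∧ (∀ i, 0 ≤ t' i) ∧ (∀ i ∉ s', t' i = 0) ∧
      ∑ i ∈ s', t' i • v i = ∑ i ∈ s, t i • v i ∧
      LinearIndependent ℝ (fun i : s' => v i) := by
  intro Nb
  induction Nb with
  | zero =>
    intro s hs t ht
    have : s = ∅ := Finset.card_eq_zero.mp (Nat.le_zero.mp hs)
    subst this
    refine ⟨∅, fun _ => 0, subset_rfl, fun _ => le_rfl, fun _ _ => rfl, by simp, ?_⟩
    exact linearIndependent_empty_type
  | succ Nb ih =>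
    intro s hs t ht
    by_cases hLI : LinearIndependent ℝ (fun i : s => v i)
    · refine ⟨s, fun i => if i ∈ s then t i else 0, subset_rfl, ?_, ?_, ?_, hLI⟩
      · intro i; by_cases h : i ∈ s <;> simp [h, ht i]
      · intro i h; simp [h]
      · exact Finset.sum_congr rfl fun i hi => by simp [hi]
    · -- get a relation with a positive coefficient
      have hrel : ∃ a : ι → ℝ, (∃ i ∈ s, 0 < a i) ∧ ∑ i ∈ s, a i • v i = 0 := by
        obtain ⟨gg, hgsum, i₁, hgi₁⟩ := Fintype.not_linearIndependent_iff.mp hLI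
        set a : ι → ℝ := fun i => if h : i ∈ s then gg ⟨i, h⟩ else 0 with ha
        have hsum : ∑ i ∈ s, a i • v i = 0 := by
          rw [← Finset.sum_attach s (fun i => a i • v i)]
          rw [← hgsum]
          exact Finset.sum_congr rfl fun i _ => by simp [ha, i.2]
        have hane : a (i₁ : ι) ≠ 0 := by simpa [ha, i₁.2] using hgi₁
        rcases lt_or_gt_of_ne hane with hneg | hpos
        · refine ⟨-a, ⟨i₁, i₁.2, by simpa using hneg⟩, ?_⟩
          simp only [Pi.neg_apply, neg_smul, Finset.sum_neg_distrib, hsum, neg_zero]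
        · exact ⟨a, ⟨i₁, i₁.2, hpos⟩, hsum⟩
      obtain ⟨a, ⟨ipos, hipos, hpos⟩, hsum⟩ := hrel
      set T : Finset ι := s.filter (fun i => 0 < a i) with hT
      have hTne : T.Nonempty := ⟨ipos, Finset.mem_filter.mpr ⟨hipos, hpos⟩⟩
      obtain ⟨i₀, hi₀T, hmin⟩ := Finset.exists_min_image T (fun i => t i / a i) hTne
      have hi₀s : i₀ ∈ s := (Finset.mem_filter.mp hi₀T).1
      have hai₀ : 0 < a i₀ := (Finset.mem_filter.mp hi₀T).2
      set α : ℝ := t i₀ / a i₀ with hα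
      have hα0 : 0 ≤ α := div_nonneg (ht i₀) hai₀.le
      set t'' : ι → ℝ := fun i => if i ∈ s then t i - α * a i else 0 with ht''
      have ht''0 : ∀ i, 0 ≤ t'' i := by
        intro i
        by_cases his : i ∈ s
        · simp only [ht'', if_pos his]
          by_cases hai : 0 < a i
          · have hiT : i ∈ T := Finset.mem_filter.mpr ⟨his, hai⟩
            have := hmin i hiT
            rw [div_le_div_iff₀ hai₀ hai] at this
            have h2 : α * a i ≤ t i := by
              rw [hα, div_mul_eq_mul_div, div_le_iff₀ hai₀]; linarith
            linarith
          · push_neg at hai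
            nlinarith [ht i, mul_nonpos_of_nonneg_of_nonpos hα0 hai]
        · simp [ht'', his]
      have ht''i₀ : t'' i₀ = 0 := by
        simp only [ht'', if_pos hi₀s, hα]
        field_simp
        ring
      have hcard : (s.erase i₀).card ≤ Nb := by
        have h1 : 0 < s.card := Finset.card_pos.mpr ⟨i₀, hi₀s⟩
        rw [Finset.card_erase_of_mem hi₀s]
        omega
      obtain ⟨s', t', hsub, h0, hsupp, hseq, hLI'⟩ := ih (s.erase i₀) hcard t'' ht''0
      refine ⟨s', t', hsub.trans (Finset.erase_subset _ _), h0, hsupp, ?_, hLI'⟩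
      rw [hseq]
      have e1 : ∑ i ∈ s.erase i₀, t'' i • v i = ∑ i ∈ s, t'' i • v i :=
        Finset.sum_erase _ (by rw [ht''i₀, zero_smul])
      rw [e1]
      have e2 : ∀ i ∈ s, t'' i • v i = t i • v i - α • (a i • v i) := by
        intro i hi
        simp only [ht'', if_pos hi, sub_smul, smul_smul]
      rw [Finset.sum_congr rfl e2, Finset.sum_sub_distrib, ← Finset.smul_sum, hsum, smul_zero,
        sub_zero]

lemma carath {ι : Type*} [DecidableEq ι] {E : Type*} [AddCommGroup E] [Module ℝ E]
    (v : ι → E) (s : Finset ι) (t : ι → ℝ) (ht : ∀ i, 0 ≤ t i) :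
    ∃ (s' : Finset ι) (t' : ι → ℝ), s' ⊆ s ∧ (∀ i, 0 ≤ t' i) ∧ (∀ i ∉ s', t' i = 0) ∧
      ∑ i ∈ s', t' i • v i = ∑ i ∈ s, t i • v i ∧
      LinearIndependent ℝ (fun i : s' => v i) :=
  carath_aux v s.card s le_rfl t ht

/-- Abstract approximate-KKT plus CPLD implies existence of limiting multipliers. -/
lemma lemA {ι : Type*} [Fintype ι] [DecidableEq ι] {E : Type*} [NormedAddCommGroup E]
    [NormedSpace ℝ E]
    (A : Finset ι) (V : ℕ → ι → E) (Vbar : ι → E)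
    (hV : ∀ i, Tendsto (fun k => V k i) atTop (𝓝 (Vbar i)))
    (b : ℕ → E) (bbar : E) (hb : Tendsto b atTop (𝓝 bbar))
    (t : ℕ → ι → ℝ) (ht0 : ∀ k i, 0 ≤ t k i) (htA : ∀ k, ∀ i ∉ A, t k i = 0)
    (heq : Tendsto (fun k => b k + ∑ i, t k i • V k i) atTop (𝓝 0))
    (hcpld : ∀ I : Finset ι, I ⊆ A → PosLinDep I Vbar →
      ∀ᶠ k in atTop, LinDep I (V k)) :
    ∃ tb : ι → ℝ, (∀ i, 0 ≤ tb i) ∧ (∀ i ∉ A, tb i = 0) ∧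
      bbar + ∑ i, tb i • Vbar i = 0 := by
  classical
  -- Carathéodory reduction at every step
  choose S t' hsub ht'0 hsupp hseq hLI using fun k => carath (V k) A (t k) (ht0 k)
  -- the reduced multipliers satisfy the same asymptotic equation
  have hsum_eq : ∀ k, ∑ i, t' k i • V k i = ∑ i, t k i • V k i := by
    intro k
    rw [← Finset.sum_subset (Finset.subset_univ (S k))
        (fun i _ hi => by rw [hsupp k i hi, zero_smul]), hseq k,
      Finset.sum_subset (Finset.subset_univ A)
        (fun i _ hi => by rw [htA k i hi, zero_smul])]
  have heq' : Tendsto (fun k => b k + ∑ i, t' k i • V k i) atTop (𝓝 0) := by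
    refine heq.congr fun k => by rw [hsum_eq k]
  -- pigeonhole on the support sets
  have hfreq : ∃ S₀ : Finset ι, ∃ᶠ k in atTop, S k = S₀ := by
    by_contra hcon
    push_neg at hcon
    obtain ⟨k, hk⟩ := (eventually_all.mpr hcon).exists
    exact hk (S k) rfl
  obtain ⟨S₀, hS₀⟩ := hfreq
  obtain ⟨φ, hφmono, hφS⟩ := extraction_of_frequently_atTop hS₀
  have hS₀A : S₀ ⊆ A := hφS 0 ▸ hsub (φ 0)
  -- normalization
  set σ : ℕ → ℝ := fun k => ∑ i, t' k i with hσdef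
  have hσ0 : ∀ k, 0 ≤ σ k := fun k => Finset.sum_nonneg fun i _ => ht'0 k i
  set den : ℕ → ℝ := fun k => 1 + σ k with hden
  have hden_pos : ∀ k, 0 < den k := fun k => by have := hσ0 k; simp only [hden]; linarith
  set s : ℕ → ι → ℝ := fun k i => t' k i * (den k)⁻¹ with hsdef
  have hs0 : ∀ k i, 0 ≤ s k i := fun k i =>
    mul_nonneg (ht'0 k i) (inv_nonneg.mpr (hden_pos k).le)
  have hsle : ∀ k i, s k i ≤ 1 := by
    intro k i
    have h1 : t' k i ≤ σ k := Finset.single_le_sum (fun i _ => ht'0 k i) (Finset.mem_univ i)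
    have h2 : t' k i ≤ den k := by simp only [hden]; linarith
    rw [hsdef]
    calc t' k i * (den k)⁻¹ ≤ den k * (den k)⁻¹ :=
          mul_le_mul_of_nonneg_right h2 (inv_nonneg.mpr (hden_pos k).le)
      _ = 1 := mul_inv_cancel₀ (hden_pos k).ne'
  have hssum : ∀ k, ∑ i, s k i = σ k * (den k)⁻¹ := by
    intro k; rw [hsdef, ← Finset.sum_mul]
  have hinvden : ∀ k, (den k)⁻¹ = 1 - ∑ i, s k i := by
    intro k
    rw [hssum k, eq_sub_iff_add_eq]
    have h3 : (den k)⁻¹ + σ k * (den k)⁻¹ = (1 + σ k) * (den k)⁻¹ := by ring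
    rw [h3]
    show den k * (den k)⁻¹ = 1
    exact mul_inv_cancel₀ (hden_pos k).ne'
  -- compactness
  have hmem : ∀ j, (fun i => s (φ j) i) ∈ Set.Icc (0 : ι → ℝ) 1 := by
    intro j
    rw [Set.mem_Icc]
    exact ⟨fun i => hs0 _ i, fun i => hsle _ i⟩
  obtain ⟨sbar, hsbarmem, ψ, hψmono, hψconv⟩ :=
    (isCompact_Icc (a := (0 : ι → ℝ)) (b := 1)).tendsto_subseq hmem
  set ρ : ℕ → ℕ := φ ∘ ψ with hρ
  have hρmono : StrictMono ρ := hφmono.comp hψmono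
  have hρtop : Tendsto ρ atTop atTop := hρmono.tendsto_atTop
  have hρS : ∀ j, S (ρ j) = S₀ := fun j => hφS (ψ j)
  have hscoord : ∀ i, Tendsto (fun j => s (ρ j) i) atTop (𝓝 (sbar i)) := by
    intro i
    exact ((continuous_apply i).tendsto sbar).comp hψconv
  have hsbar0 : ∀ i, 0 ≤ sbar i := fun i => (Set.mem_Icc.mp hsbarmem).1 i
  have hsbarsupp : ∀ i ∉ S₀, sbar i = 0 := by
    intro i hi
    have hz : ∀ j, s (ρ j) i = 0 := by
      intro j
      have : t' (ρ j) i = 0 := hsupp (ρ j) i (by rw [hρS j]; exact hi)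
      simp [hsdef, this]
    exact tendsto_nhds_unique ((hscoord i).congr hz) tendsto_const_nhds
  set βbar : ℝ := 1 - ∑ i, sbar i with hβbar
  have hβconv : Tendsto (fun j => (den (ρ j))⁻¹) atTop (𝓝 βbar) := by
    have : Tendsto (fun j => 1 - ∑ i, s (ρ j) i) atTop (𝓝 βbar) :=
      tendsto_const_nhds.sub (tendsto_finset_sum _ fun i _ => hscoord i)
    exact this.congr fun j => (hinvden (ρ j)).symm
  have hβbar0 : 0 ≤ βbar :=
    ge_of_tendsto hβconv (Eventually.of_forall fun j => inv_nonneg.mpr (hden_pos _).le)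
  -- pass to the limit in the normalized equation
  have hkey : βbar • bbar + ∑ i, sbar i • Vbar i = 0 := by
    have hzero : Tendsto (fun k => (den k)⁻¹ • (b k + ∑ i, t' k i • V k i)) atTop (𝓝 0) := by
      have hbound : ∀ k, ‖(den k)⁻¹ • (b k + ∑ i, t' k i • V k i)‖ ≤
          ‖b k + ∑ i, t' k i • V k i‖ := by
        intro k
        rw [norm_smul]
        have h1 : ‖(den k)⁻¹‖ ≤ 1 := by
          rw [Real.norm_eq_abs, abs_of_nonneg (inv_nonneg.mpr (hden_pos k).le)]
          rw [inv_le_one_iff₀]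
          right
          simp only [hden]; linarith [hσ0 k]
        calc ‖(den k)⁻¹‖ * ‖b k + ∑ i, t' k i • V k i‖
            ≤ 1 * ‖b k + ∑ i, t' k i • V k i‖ :=
              mul_le_mul_of_nonneg_right h1 (norm_nonneg _)
          _ = _ := one_mul _
      exact squeeze_zero_norm hbound (by simpa using heq'.norm)
    have hlim : Tendsto (fun j => (den (ρ j))⁻¹ • (b (ρ j) + ∑ i, t' (ρ j) i • V (ρ j) i))
        atTop (𝓝 (βbar • bbar + ∑ i, sbar i • Vbar i)) := by
      have hexp : ∀ j, (den (ρ j))⁻¹ • (b (ρ j) + ∑ i, t' (ρ j) i • V (ρ j) i)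
          = (den (ρ j))⁻¹ • b (ρ j) + ∑ i, s (ρ j) i • V (ρ j) i := by
        intro j
        rw [smul_add, Finset.smul_sum]
        congr 1
        refine Finset.sum_congr rfl fun i _ => ?_
        show (den (ρ j))⁻¹ • t' (ρ j) i • V (ρ j) i
          = (t' (ρ j) i * (den (ρ j))⁻¹) • V (ρ j) i
        rw [smul_smul, mul_comm]
      rw [funext hexp]
      exact (hβconv.smul (hb.comp hρtop)).add
        (tendsto_finset_sum _ fun i _ => (hscoord i).smul ((hV i).comp hρtop))
    exact tendsto_nhds_unique hlim (hzero.comp hρtop)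
  rcases eq_or_lt_of_le hβbar0 with hβ0 | hβpos
  · -- degenerate case: contradiction with CPLD
    exfalso
    have hsum1 : ∑ i, sbar i = 1 := by
      simp only [hβbar] at hβ0; linarith
    have hPLD : PosLinDep S₀ Vbar := by
      refine ⟨sbar, hsbar0, ?_, ?_⟩
      · by_contra hcon
        push_neg at hcon
        have : ∑ i, sbar i = 0 := by
          refine Finset.sum_eq_zero fun i _ => ?_
          by_cases hi : i ∈ S₀
          · exact hcon i hi
          · exact hsbarsupp i hi
        rw [this] at hsum1; norm_num at hsum1
      · have h1 : ∑ i ∈ S₀, sbar i • Vbar i = ∑ i, sbar i • Vbar i :=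
          Finset.sum_subset (Finset.subset_univ S₀)
            (fun i _ hi => by rw [hsbarsupp i hi, zero_smul])
        rw [h1]
        have := hkey
        rw [← hβ0, zero_smul, zero_add] at this
        exact this
    have hev : ∀ᶠ k in atTop, LinDep S₀ (V k) := hcpld S₀ hS₀A hPLD
    obtain ⟨j, hj⟩ := (hρtop.eventually hev).exists
    exact not_linDep_of_linearIndependent S₀ (V (ρ j)) (hρS j ▸ hLI (ρ j)) hj
  · refine ⟨fun i => βbar⁻¹ * sbar i, fun i => mul_nonneg (inv_nonneg.mpr hβbar0) (hsbar0 i),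
      fun i hi => by show βbar⁻¹ * sbar i = 0; rw [hsbarsupp i (fun h => hi (hS₀A h)), mul_zero],
      ?_⟩
    have h4 := congrArg (fun z : E => βbar⁻¹ • z) hkey
    simp only [smul_add, smul_zero, Finset.smul_sum, smul_smul,
      inv_mul_cancel₀ hβpos.ne', one_smul] at h4
    simpa using h4

/-- The canonical continuous linear inclusion of player `ν`'s block. -/
noncomputable def blockIncl {N : ℕ} {n : Fin N → ℕ} (ν : Fin N) :
    EuclideanSpace ℝ (Fin (n ν)) →L[ℝ] Strat n :=
  LinearMap.toContinuousLinearMap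
    (LinearMap.single ℝ (fun μ => EuclideanSpace ℝ (Fin (n μ))) ν)

lemma update_eq_add {N : ℕ} {n : Fin N → ℕ} (ν : Fin N) (x : Strat n)
    (z : EuclideanSpace ℝ (Fin (n ν))) :
    Function.update x ν z = (x - blockIncl ν (x ν)) + blockIncl ν z := by
  funext μ
  by_cases hμ : μ = ν
  · subst hμ
    simp [blockIncl]
  · simp [blockIncl, Function.update_of_ne hμ, Pi.single_eq_of_ne hμ]

lemma pgrad_eq {N : ℕ} {n : Fin N → ℕ} (ν : Fin N) (f : Strat n → ℝ)
    (hf : ContDiff ℝ 1 f) (x : Strat n) :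
    pgrad ν f x = (InnerProductSpace.toDual ℝ (EuclideanSpace ℝ (Fin (n ν)))).symm
      ((fderiv ℝ f x).comp (blockIncl ν)) := by
  have h1 : HasFDerivAt (fun z => Function.update x ν z) (blockIncl ν) (x ν) := by
    have h0 : HasFDerivAt
        (fun z : EuclideanSpace ℝ (Fin (n ν)) => (x - blockIncl ν (x ν)) + blockIncl ν z)
        (blockIncl ν) (x ν) := ((blockIncl ν).hasFDerivAt).const_add _
    exact h0.congr_of_eventuallyEq (Filter.Eventually.of_forall fun z => update_eq_add ν x z)
  have hfx : HasFDerivAt f (fderiv ℝ f x) (Function.update x ν (x ν)) := by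
    rw [Function.update_eq_self]
    exact ((hf.differentiable one_ne_zero) x).hasFDerivAt
  have h2 : HasFDerivAt (fun z => f (Function.update x ν z))
      ((fderiv ℝ f x).comp (blockIncl ν)) (x ν) := hfx.comp (x ν) h1
  exact h2.hasGradientAt.gradient

lemma pgrad_continuous {N : ℕ} {n : Fin N → ℕ} (ν : Fin N) (f : Strat n → ℝ)
    (hf : ContDiff ℝ 1 f) : Continuous (pgrad ν f) := by
  have heq : pgrad ν f = fun x =>
      (InnerProductSpace.toDual ℝ (EuclideanSpace ℝ (Fin (n ν)))).symm
        ((fderiv ℝ f x).comp (blockIncl ν)) := funext (pgrad_eq ν f hf)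
  rw [heq]
  exact (InnerProductSpace.toDual ℝ _).symm.continuous.comp
    ((hf.continuous_fderiv one_ne_zero).clm_comp continuous_const)

/-- **Theorem 4.6 (a).** A feasible limit point of the augmented Lagrangian
iterates at which GNEP-CPLD holds for the combined constraints is a KKT point of the GNEP. -/
theorem stmt14 {N : ℕ} {n m p : Fin N → ℕ}
    (θ : Fin N → Strat n → ℝ)
    (g : (ν : Fin N) → Fin (m ν) → Strat n → ℝ)
    (h : (ν : Fin N) → Fin (p ν) → Strat n → ℝ)
    (hθ : ∀ ν, ContDiff ℝ 1 (θ ν))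
    (hg : ∀ ν i, ContDiff ℝ 1 (g ν i))
    (hh : ∀ ν j, ContDiff ℝ 1 (h ν j))
    (x : ℕ → Strat n)
    (lam : (k : ℕ) → (ν : Fin N) → Fin (m ν) → ℝ)
    (mu : (k : ℕ) → (ν : Fin N) → Fin (p ν) → ℝ)
    (u : (k : ℕ) → (ν : Fin N) → Fin (m ν) → ℝ)
    (rho : ℕ → Fin N → ℝ)
    (umax : ℝ) (τ γ : Fin N → ℝ)
    (humax : 0 ≤ umax)
    (hτ : ∀ ν, τ ν ∈ Set.Ioo (0:ℝ) 1)
    (hγ : ∀ ν, 1 < γ ν)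
    (hrho0 : ∀ ν, 0 < rho 0 ν)
    (hu0 : ∀ ν i, u 0 ν i ∈ Set.Icc 0 umax)
    (hlam : ∀ k ν i, lam (k+1) ν i = max (u k ν i + rho k ν * g ν i (x (k+1))) 0)
    (hu : ∀ k ν i, u (k+1) ν i = min (lam (k+1) ν i) umax)
    (hrho : ∀ k ν,
      (Real.sqrt (∑ i, (min (-(g ν i (x (k+1)))) (lam (k+1) ν i)) ^ 2) ≤
          τ ν * Real.sqrt (∑ i, (min (-(g ν i (x k))) (lam k ν i)) ^ 2) →
        rho (k+1) ν = rho k ν) ∧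
      (¬ (Real.sqrt (∑ i, (min (-(g ν i (x (k+1)))) (lam (k+1) ν i)) ^ 2) ≤
          τ ν * Real.sqrt (∑ i, (min (-(g ν i (x k))) (lam k ν i)) ^ 2)) →
        rho (k+1) ν = γ ν * rho k ν))
    (eps eps' : ℕ → ℝ)
    (heps0 : ∀ k, 0 ≤ eps k)
    (heps'0 : ∀ k, 0 ≤ eps' k)
    (heps' : Tendsto eps' atTop (𝓝 0))
    (hA1 : ∀ k ν, ‖pgrad ν (θ ν) (x (k+1))
        + ∑ i, max (u k ν i + rho k ν * g ν i (x (k+1))) 0 • pgrad ν (g ν i) (x (k+1))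
        + ∑ j, mu (k+1) ν j • pgrad ν (h ν j) (x (k+1))‖ ≤ eps k)
    (hA2 : ∀ k ν, Real.sqrt (∑ j, (min (-(h ν j (x (k+1)))) (mu (k+1) ν j)) ^ 2) ≤ eps' k)
    (heps : Tendsto eps atTop (𝓝 0))
    (xbar : Strat n)
    (hclus : MapClusterPt xbar atTop x)
    (hfeasg : ∀ ν i, g ν i xbar ≤ 0)
    (hfeash : ∀ ν j, h ν j xbar ≤ 0)
    (hCPLD : ∀ ν, CPLDnu ν (Sum.elim (g ν) (h ν)) xbar) :
    ∃ (lambar : (ν : Fin N) → Fin (m ν) → ℝ) (mubar : (ν : Fin N) → Fin (p ν) → ℝ),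
      ∀ ν, (pgrad ν (θ ν) xbar + ∑ i, lambar ν i • pgrad ν (g ν i) xbar
          + ∑ j, mubar ν j • pgrad ν (h ν j) xbar = 0) ∧
        (∀ i, min (-(g ν i xbar)) (lambar ν i) = 0) ∧
        (∀ j, min (-(h ν j xbar)) (mubar ν j) = 0) := by
  classical
  -- extract a convergent subsequence, shifted so all indices have the form k + 1
  obtain ⟨φ, hφmono, hφconv⟩ := TopologicalSpace.FirstCountableTopology.tendsto_subseq hclus
  set ψ : ℕ → ℕ := fun j => φ (j + 1) - 1 with hψdef
  have hψ1 : ∀ j, ψ j + 1 = φ (j + 1) := by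
    intro j
    have h1 : j + 1 ≤ φ (j + 1) := hφmono.le_apply
    simp only [hψdef]
    omega
  have hψtop : Tendsto ψ atTop atTop := by
    refine tendsto_atTop_mono (f := id) (fun j => ?_) tendsto_id
    have h1 : j + 1 ≤ φ (j + 1) := hφmono.le_apply
    simp only [hψdef, id_eq]
    omega
  have hψ1top : Tendsto (fun j => ψ j + 1) atTop atTop :=
    tendsto_atTop_mono (fun j => Nat.le_succ (ψ j)) hψtop
  have hxconv : Tendsto (fun j => x (ψ j + 1)) atTop (𝓝 xbar) := by
    have he : (fun j => x (ψ j + 1)) = fun j => (x ∘ φ) (j + 1) := funext fun j => by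
      rw [hψ1 j]; rfl
    rw [he]
    exact hφconv.comp (tendsto_add_atTop_nat 1)
  -- basic facts about the algorithm
  have hlamnn : ∀ k ν i, 0 ≤ lam (k+1) ν i := fun k ν i => by
    rw [hlam]; exact le_max_right _ _
  have hub : ∀ k ν i, 0 ≤ u k ν i ∧ u k ν i ≤ umax := by
    intro k
    induction k with
    | zero => exact fun ν i => ⟨(hu0 ν i).1, (hu0 ν i).2⟩
    | succ k _ =>
      intro ν i
      rw [hu]
      exact ⟨le_min (hlamnn k ν i) humax, min_le_right _ _⟩
  have hrhopos : ∀ k ν, 0 < rho k ν := by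
    intro k
    induction k with
    | zero => exact hrho0
    | succ k ih =>
      intro ν
      by_cases hc : Real.sqrt (∑ i, (min (-(g ν i (x (k+1)))) (lam (k+1) ν i)) ^ 2) ≤
          τ ν * Real.sqrt (∑ i, (min (-(g ν i (x k))) (lam k ν i)) ^ 2)
      · rw [(hrho k ν).1 hc]; exact ih ν
      · rw [(hrho k ν).2 hc]
        exact mul_pos (lt_trans one_pos (hγ ν)) (ih ν)
  have hrhomono : ∀ ν, Monotone fun k => rho k ν := by
    intro ν
    apply monotone_nat_of_le_succ
    intro k
    by_cases hc : Real.sqrt (∑ i, (min (-(g ν i (x (k+1)))) (lam (k+1) ν i)) ^ 2) ≤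
        τ ν * Real.sqrt (∑ i, (min (-(g ν i (x k))) (lam k ν i)) ^ 2)
    · rw [(hrho k ν).1 hc]
    · rw [(hrho k ν).2 hc]
      exact le_mul_of_one_le_left (hrhopos k ν).le (hγ ν).le
  -- the key per-player statement
  have key : ∀ ν : Fin N, ∃ (lb : Fin (m ν) → ℝ) (mb : Fin (p ν) → ℝ),
      (pgrad ν (θ ν) xbar + ∑ i, lb i • pgrad ν (g ν i) xbar
        + ∑ j, mb j • pgrad ν (h ν j) xbar = 0) ∧ (∀ i, 0 ≤ lb i) ∧ (∀ j, 0 ≤ mb j) ∧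
      (∀ i, g ν i xbar ≠ 0 → lb i = 0) ∧ (∀ j, h ν j xbar ≠ 0 → mb j = 0) := by
    intro ν
    have hepsψ : Tendsto (fun j => eps (ψ j)) atTop (𝓝 0) := heps.comp hψtop
    have heps'ψ : Tendsto (fun j => eps' (ψ j)) atTop (𝓝 0) := heps'.comp hψtop
    -- componentwise bounds on the h-residuals
    have hmu_min : ∀ (j : ℕ) q, |min (-(h ν q (x (ψ j + 1)))) (mu (ψ j + 1) ν q)| ≤ eps' (ψ j) := by
      intro j q
      have h1 := hA2 (ψ j) ν
      calc |min (-(h ν q (x (ψ j + 1)))) (mu (ψ j + 1) ν q)|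
          = Real.sqrt ((min (-(h ν q (x (ψ j + 1)))) (mu (ψ j + 1) ν q)) ^ 2) :=
            (Real.sqrt_sq_eq_abs _).symm
        _ ≤ Real.sqrt (∑ q', (min (-(h ν q' (x (ψ j + 1)))) (mu (ψ j + 1) ν q')) ^ 2) :=
            Real.sqrt_le_sqrt (Finset.single_le_sum
              (f := fun q' => (min (-(h ν q' (x (ψ j + 1)))) (mu (ψ j + 1) ν q')) ^ 2)
              (fun q' _ => sq_nonneg _) (Finset.mem_univ q))
        _ ≤ eps' (ψ j) := h1
    have hmin_h : ∀ q, Tendsto (fun j => min (-(h ν q (x (ψ j + 1)))) (mu (ψ j + 1) ν q))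
        atTop (𝓝 0) := fun q => squeeze_zero_norm (fun j => hmu_min j q) heps'ψ
    -- multipliers of inactive h-constraints vanish in the limit
    have hmu_inactive : ∀ q, h ν q xbar ≠ 0 →
        Tendsto (fun j => mu (ψ j + 1) ν q) atTop (𝓝 0) := by
      intro q hq
      have hδ : 0 < -(h ν q xbar) := by
        rcases lt_or_eq_of_le (hfeash ν q) with h1 | h1
        · linarith
        · exact absurd h1 hq
      set δ : ℝ := -(h ν q xbar) with hδdef
      have haconv : Tendsto (fun j => -(h ν q (x (ψ j + 1)))) atTop (𝓝 δ) :=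
        (((hh ν q).continuous.tendsto xbar).comp hxconv).neg
      have hev1 : ∀ᶠ j in atTop, δ / 2 < -(h ν q (x (ψ j + 1))) :=
        haconv.eventually (eventually_gt_nhds (by linarith))
      have hev2 : ∀ᶠ j in atTop,
          |min (-(h ν q (x (ψ j + 1)))) (mu (ψ j + 1) ν q)| < δ / 2 := by
        have := NormedAddCommGroup.tendsto_nhds_zero.mp (hmin_h q) (δ / 2) (by linarith)
        simpa [Real.norm_eq_abs] using this
      have hev : ∀ᶠ j in atTop, min (-(h ν q (x (ψ j + 1)))) (mu (ψ j + 1) ν q)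
          = mu (ψ j + 1) ν q := by
        filter_upwards [hev1, hev2] with j h1 h2
        rcases le_total (mu (ψ j + 1) ν q) (-(h ν q (x (ψ j + 1)))) with hle | hle
        · exact min_eq_right hle
        · exfalso
          rw [min_eq_left hle, abs_of_pos (by linarith)] at h2
          linarith
      exact Filter.Tendsto.congr' hev (hmin_h q)
    -- the negative parts of the h-multipliers vanish
    have hmu_minzero : ∀ q, Tendsto (fun j => min (mu (ψ j + 1) ν q) 0) atTop (𝓝 0) := by
      intro q
      refine squeeze_zero_norm (fun j => ?_) heps'ψ
      rcases le_or_gt 0 (mu (ψ j + 1) ν q) with hm | hm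
      · rw [min_eq_right hm]
        simpa using heps'0 (ψ j)
      · rw [min_eq_left hm.le, Real.norm_eq_abs, abs_of_neg hm]
        have h1 := (abs_le.mp (hmu_min j q)).1
        have h2 : min (-(h ν q (x (ψ j + 1)))) (mu (ψ j + 1) ν q) ≤ mu (ψ j + 1) ν q :=
          min_le_right _ _
        linarith
    -- multipliers of inactive g-constraints vanish in the limit
    have hlam_inactive : ∀ i, g ν i xbar ≠ 0 →
        Tendsto (fun j => lam (ψ j + 1) ν i) atTop (𝓝 0) := by
      intro i hi
      have hδ : 0 < -(g ν i xbar) := by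
        rcases lt_or_eq_of_le (hfeasg ν i) with h1 | h1
        · linarith
        · exact absurd h1 hi
      set δ : ℝ := -(g ν i xbar) with hδdef
      have hgbar : g ν i xbar = -δ := by rw [hδdef]; ring
      have haconv : Tendsto (fun j => -(g ν i (x (ψ j + 1)))) atTop (𝓝 δ) :=
        (((hg ν i).continuous.tendsto xbar).comp hxconv).neg
      by_cases hcase : ∀ᶠ k in atTop,
          Real.sqrt (∑ i', (min (-(g ν i' (x (k+1)))) (lam (k+1) ν i')) ^ 2) ≤
            τ ν * Real.sqrt (∑ i', (min (-(g ν i' (x k))) (lam k ν i')) ^ 2)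
      · -- geometric decay of the penalty residual
        set P : ℕ → ℝ := fun k => Real.sqrt (∑ i', (min (-(g ν i' (x k))) (lam k ν i')) ^ 2)
          with hPdef
        obtain ⟨k₀, hk₀⟩ := eventually_atTop.mp hcase
        have hgeo : ∀ jj, P (k₀ + jj) ≤ (τ ν) ^ jj * P k₀ := by
          intro jj
          induction jj with
          | zero => simp
          | succ jj ih =>
            have h1 : P (k₀ + jj + 1) ≤ τ ν * P (k₀ + jj) := hk₀ (k₀ + jj) (Nat.le_add_right _ _)
            calc P (k₀ + (jj + 1)) = P ((k₀ + jj) + 1) := rfl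
              _ ≤ τ ν * P (k₀ + jj) := h1
              _ ≤ τ ν * ((τ ν) ^ jj * P k₀) := mul_le_mul_of_nonneg_left ih (hτ ν).1.le
              _ = (τ ν) ^ (jj + 1) * P k₀ := by ring
        have hP0 : Tendsto P atTop (𝓝 0) := by
          rw [← tendsto_add_atTop_iff_nat k₀]
          refine squeeze_zero (g := fun jj => (τ ν) ^ jj * P k₀)
            (fun jj => Real.sqrt_nonneg _) (fun jj => ?_) ?_
          · rw [Nat.add_comm]; exact hgeo jj
          · simpa using
              (tendsto_pow_atTop_nhds_zero_of_lt_one (hτ ν).1.le (hτ ν).2).mul_const (P k₀)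
        have hcomp : ∀ k, |min (-(g ν i (x k))) (lam k ν i)| ≤ P k := by
          intro k
          calc |min (-(g ν i (x k))) (lam k ν i)|
              = Real.sqrt ((min (-(g ν i (x k))) (lam k ν i)) ^ 2) := (Real.sqrt_sq_eq_abs _).symm
            _ ≤ P k := Real.sqrt_le_sqrt
                (Finset.single_le_sum (f := fun i' => (min (-(g ν i' (x k))) (lam k ν i')) ^ 2)
                  (fun i' _ => sq_nonneg _) (Finset.mem_univ i))
        have hminto : Tendsto (fun j => min (-(g ν i (x (ψ j + 1)))) (lam (ψ j + 1) ν i))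
            atTop (𝓝 0) := by
          have h1 : Tendsto (fun k => min (-(g ν i (x k))) (lam k ν i)) atTop (𝓝 0) :=
            squeeze_zero_norm (fun k => hcomp k) hP0
          exact h1.comp hψ1top
        have hev1 : ∀ᶠ j in atTop, δ / 2 < -(g ν i (x (ψ j + 1))) :=
          haconv.eventually (eventually_gt_nhds (by linarith))
        have hev2 : ∀ᶠ j in atTop,
            |min (-(g ν i (x (ψ j + 1)))) (lam (ψ j + 1) ν i)| < δ / 2 := by
          have := NormedAddCommGroup.tendsto_nhds_zero.mp hminto (δ / 2) (by linarith)
          simpa [Real.norm_eq_abs] using this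
        have hev : ∀ᶠ j in atTop, min (-(g ν i (x (ψ j + 1)))) (lam (ψ j + 1) ν i)
            = lam (ψ j + 1) ν i := by
          filter_upwards [hev1, hev2] with j h1 h2
          rcases le_total (lam (ψ j + 1) ν i) (-(g ν i (x (ψ j + 1)))) with hle | hle
          · exact min_eq_right hle
          · exfalso
            rw [min_eq_left hle, abs_of_pos (by linarith)] at h2
            linarith
        exact Filter.Tendsto.congr' hev hminto
      · -- penalty parameter diverges
        have hfreq := Filter.not_eventually.mp hcase
        have hrhotop : Tendsto (fun k => rho k ν) atTop atTop := by
          have hstep : ∀ jj : ℕ, ∃ k, (γ ν) ^ jj * rho 0 ν ≤ rho k ν := by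
            intro jj
            induction jj with
            | zero => exact ⟨0, by simp⟩
            | succ jj ih =>
              obtain ⟨k, hk⟩ := ih
              obtain ⟨k', hk', hfail⟩ := frequently_atTop.mp hfreq k
              refine ⟨k' + 1, ?_⟩
              rw [(hrho k' ν).2 hfail]
              have h2 : rho k ν ≤ rho k' ν := hrhomono ν hk'
              have h3 : (0:ℝ) < γ ν := lt_trans one_pos (hγ ν)
              calc (γ ν) ^ (jj + 1) * rho 0 ν = γ ν * ((γ ν) ^ jj * rho 0 ν) := by ring
                _ ≤ γ ν * rho k ν := by nlinarith
                _ ≤ γ ν * rho k' ν := by nlinarith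
          rw [tendsto_atTop]
          intro M
          obtain ⟨jj, hjj⟩ := pow_unbounded_of_one_lt (M / rho 0 ν) (hγ ν)
          obtain ⟨k₀, hk₀⟩ := hstep jj
          have hM : M ≤ rho k₀ ν := by
            rw [div_lt_iff₀ (hrho0 ν)] at hjj
            linarith
          filter_upwards [eventually_ge_atTop k₀] with k hk
          exact le_trans hM (hrhomono ν hk)
        have hrhoψ : Tendsto (fun j => rho (ψ j) ν) atTop atTop := hrhotop.comp hψtop
        have hev1 : ∀ᶠ j in atTop, g ν i (x (ψ j + 1)) < -(δ / 2) := by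
          have hgc : Tendsto (fun j => g ν i (x (ψ j + 1))) atTop (𝓝 (g ν i xbar)) :=
            ((hg ν i).continuous.tendsto xbar).comp hxconv
          exact hgc.eventually (eventually_lt_nhds (by rw [hgbar]; linarith))
        have hev2 : ∀ᶠ j in atTop, umax / (δ / 2) ≤ rho (ψ j) ν :=
          hrhoψ.eventually (eventually_ge_atTop _)
        have hev : ∀ᶠ j in atTop, lam (ψ j + 1) ν i = 0 := by
          filter_upwards [hev1, hev2] with j h1 h2
          rw [hlam]
          apply max_eq_right
          have hρ := hrhopos (ψ j) ν
          have hub' := hub (ψ j) ν i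
          have h3 : rho (ψ j) ν * g ν i (x (ψ j + 1)) ≤ rho (ψ j) ν * (-(δ / 2)) :=
            mul_le_mul_of_nonneg_left h1.le hρ.le
          have h4 : umax ≤ rho (ψ j) ν * (δ / 2) := by
            rw [div_le_iff₀ (by linarith : (0:ℝ) < δ / 2)] at h2
            linarith
          have h5 : rho (ψ j) ν * (-(δ / 2)) = -(rho (ψ j) ν * (δ / 2)) := by ring
          rw [h5] at h3
          linarith [hub'.2]
        exact Filter.Tendsto.congr' (hev.mono fun j hj => hj.symm) tendsto_const_nhds
    -- set up and apply the abstract lemma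
    set c : Fin (m ν) ⊕ Fin (p ν) → Strat n → ℝ := Sum.elim (g ν) (h ν) with hcdef
    have hcC : ∀ i, ContDiff ℝ 1 (c i) := by rintro (i | q); exacts [hg ν i, hh ν q]
    set A : Finset (Fin (m ν) ⊕ Fin (p ν)) := Finset.univ.filter fun i => c i xbar = 0 with hAdef
    set Vk : ℕ → Fin (m ν) ⊕ Fin (p ν) → EuclideanSpace ℝ (Fin (n ν)) :=
      fun j i => pgrad ν (c i) (x (ψ j + 1)) with hVkdef
    set Vbar : Fin (m ν) ⊕ Fin (p ν) → EuclideanSpace ℝ (Fin (n ν)) :=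
      fun i => pgrad ν (c i) xbar with hVbardef
    have hVconv : ∀ i, Tendsto (fun j => Vk j i) atTop (𝓝 (Vbar i)) := fun i =>
      ((pgrad_continuous ν (c i) (hcC i)).tendsto xbar).comp hxconv
    set t : ℕ → Fin (m ν) ⊕ Fin (p ν) → ℝ := fun j => Sum.elim
      (fun i => if g ν i xbar = 0 then lam (ψ j + 1) ν i else 0)
      (fun q => if h ν q xbar = 0 then max (mu (ψ j + 1) ν q) 0 else 0) with htdef
    have ht0 : ∀ j i, 0 ≤ t j i := by
      intro j i
      rcases i with i | q
      · simp only [htdef, Sum.elim_inl]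
        split_ifs with hi
        · exact hlamnn _ _ _
        · exact le_rfl
      · simp only [htdef, Sum.elim_inr]
        split_ifs with hq
        · exact le_max_right _ _
        · exact le_rfl
    have htA : ∀ j, ∀ i ∉ A, t j i = 0 := by
      intro j i hi
      have hne : ¬ c i xbar = 0 := fun hc0 =>
        hi (Finset.mem_filter.mpr ⟨Finset.mem_univ i, hc0⟩)
      rcases i with i | q
      · simp only [htdef, Sum.elim_inl]
        rw [if_neg (by simpa [hcdef] using hne)]
      · simp only [htdef, Sum.elim_inr]
        rw [if_neg (by simpa [hcdef] using hne)]
    set w : ℕ → EuclideanSpace ℝ (Fin (n ν)) := fun j =>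
      pgrad ν (θ ν) (x (ψ j + 1))
      + ∑ i, lam (ψ j + 1) ν i • pgrad ν (g ν i) (x (ψ j + 1))
      + ∑ q, mu (ψ j + 1) ν q • pgrad ν (h ν q) (x (ψ j + 1)) with hwdef
    have hwnorm : ∀ j, ‖w j‖ ≤ eps (ψ j) := by
      intro j
      have h1 := hA1 (ψ j) ν
      have h2 : ∀ i, max (u (ψ j) ν i + rho (ψ j) ν * g ν i (x (ψ j + 1))) 0
          = lam (ψ j + 1) ν i := fun i => (hlam (ψ j) ν i).symm
      simpa only [hwdef, h2] using h1
    have hwzero : Tendsto w atTop (𝓝 0) := squeeze_zero_norm hwnorm hepsψ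
    set b : ℕ → EuclideanSpace ℝ (Fin (n ν)) := fun j => w j - ∑ i, t j i • Vk j i with hbdef
    have heqA : Tendsto (fun j => b j + ∑ i, t j i • Vk j i) atTop (𝓝 0) := by
      refine hwzero.congr fun j => ?_
      simp only [hbdef]
      rw [sub_add_cancel]
    have hbconv : Tendsto b atTop (𝓝 (pgrad ν (θ ν) xbar)) := by
      have hcoefg : ∀ i, Tendsto (fun j => lam (ψ j + 1) ν i - t j (Sum.inl i)) atTop (𝓝 0) := by
        intro i
        by_cases hi : g ν i xbar = 0
        · have he : ∀ j, lam (ψ j + 1) ν i - t j (Sum.inl i) = 0 := by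
            intro j; simp [htdef, hi]
          rw [funext he]; exact tendsto_const_nhds
        · have he : ∀ j, lam (ψ j + 1) ν i - t j (Sum.inl i) = lam (ψ j + 1) ν i := by
            intro j; simp [htdef, hi]
          rw [funext he]; exact hlam_inactive i hi
      have hcoefh : ∀ q, Tendsto (fun j => mu (ψ j + 1) ν q - t j (Sum.inr q)) atTop (𝓝 0) := by
        intro q
        by_cases hq : h ν q xbar = 0
        · have he : ∀ j, mu (ψ j + 1) ν q - t j (Sum.inr q) = min (mu (ψ j + 1) ν q) 0 := by
            intro j
            simp only [htdef, Sum.elim_inr, if_pos hq]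
            rcases le_total (mu (ψ j + 1) ν q) 0 with hm | hm
            · rw [max_eq_right hm, min_eq_left hm, sub_zero]
            · rw [max_eq_left hm, min_eq_right hm, sub_self]
          rw [funext he]; exact hmu_minzero q
        · have he : ∀ j, mu (ψ j + 1) ν q - t j (Sum.inr q) = mu (ψ j + 1) ν q := by
            intro j; simp [htdef, hq]
          rw [funext he]; exact hmu_inactive q hq
      have hbeq : ∀ j, b j = pgrad ν (θ ν) (x (ψ j + 1))
          + ∑ i, (lam (ψ j + 1) ν i - t j (Sum.inl i)) • Vk j (Sum.inl i)
          + ∑ q, (mu (ψ j + 1) ν q - t j (Sum.inr q)) • Vk j (Sum.inr q) := by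
        intro j
        have e1 : ∀ i : Fin (m ν), Vk j (Sum.inl i) = pgrad ν (g ν i) (x (ψ j + 1)) :=
          fun i => rfl
        have e2 : ∀ q : Fin (p ν), Vk j (Sum.inr q) = pgrad ν (h ν q) (x (ψ j + 1)) :=
          fun q => rfl
        simp only [hbdef, hwdef, Fintype.sum_sum_type, sub_smul, Finset.sum_sub_distrib, e1, e2]
        abel
      rw [funext hbeq]
      have hθconv : Tendsto (fun j => pgrad ν (θ ν) (x (ψ j + 1))) atTop
          (𝓝 (pgrad ν (θ ν) xbar)) :=
        ((pgrad_continuous ν (θ ν) (hθ ν)).tendsto xbar).comp hxconv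
      have hsum1 : Tendsto
          (fun j => ∑ i, (lam (ψ j + 1) ν i - t j (Sum.inl i)) • Vk j (Sum.inl i))
          atTop (𝓝 0) := by
        have h1 := tendsto_finset_sum (Finset.univ : Finset (Fin (m ν)))
          (fun i _ => (hcoefg i).smul (hVconv (Sum.inl i)))
        simpa using h1
      have hsum2 : Tendsto
          (fun j => ∑ q, (mu (ψ j + 1) ν q - t j (Sum.inr q)) • Vk j (Sum.inr q))
          atTop (𝓝 0) := by
        have h1 := tendsto_finset_sum (Finset.univ : Finset (Fin (p ν)))
          (fun q _ => (hcoefh q).smul (hVconv (Sum.inr q)))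
        simpa using h1
      have := (hθconv.add hsum1).add hsum2
      simpa using this
    have hcpldA : ∀ I : Finset (Fin (m ν) ⊕ Fin (p ν)), I ⊆ A → PosLinDep I Vbar →
        ∀ᶠ j in atTop, LinDep I (Vk j) := by
      intro I hIA hPLD
      have hact : ∀ i ∈ I, c i xbar = 0 := fun i hi => (Finset.mem_filter.mp (hIA hi)).2
      obtain ⟨U, hU, hUall⟩ := hCPLD ν I hact hPLD
      have hevU : ∀ᶠ j in atTop, x (ψ j + 1) ∈ U := hxconv hU
      exact hevU.mono fun j hj => hUall _ hj
    obtain ⟨tb, htb0, htbA, htbeq⟩ := lemA A Vk Vbar hVconv b (pgrad ν (θ ν) xbar) hbconv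
      t ht0 htA heqA hcpldA
    refine ⟨fun i => tb (Sum.inl i), fun q => tb (Sum.inr q), ?_, fun i => htb0 _,
      fun q => htb0 _, ?_, ?_⟩
    · have hfin := htbeq
      rw [Fintype.sum_sum_type] at hfin
      have e1 : ∀ i : Fin (m ν), Vbar (Sum.inl i) = pgrad ν (g ν i) xbar := fun i => rfl
      have e2 : ∀ q : Fin (p ν), Vbar (Sum.inr q) = pgrad ν (h ν q) xbar := fun q => rfl
      simp only [e1, e2] at hfin
      rw [← add_assoc] at hfin
      exact hfin
    · intro i hi
      refine htbA (Sum.inl i) fun hmem => hi ?_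
      have := (Finset.mem_filter.mp hmem).2
      simpa [hcdef] using this
    · intro q hq
      refine htbA (Sum.inr q) fun hmem => hq ?_
      have := (Finset.mem_filter.mp hmem).2
      simpa [hcdef] using this
  choose lb mb hkeyeq hlb0 hmb0 hlbsupp hmbsupp using key
  refine ⟨lb, mb, fun ν => ⟨hkeyeq ν, ?_, ?_⟩⟩
  · intro i
    by_cases hi : g ν i xbar = 0
    · rw [hi, neg_zero]
      exact min_eq_left (hlb0 ν i)
    · rw [hlbsupp ν i hi]
      apply min_eq_right
      have hlt : g ν i xbar < 0 := lt_of_le_of_ne (hfeasg ν i) hi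
      linarith
  · intro q
    by_cases hq : h ν q xbar = 0
    · rw [hq, neg_zero]
      exact min_eq_left (hmb0 ν q)
    · rw [hmbsupp ν q hq]
      apply min_eq_right
      have hlt : h ν q xbar < 0 := lt_of_le_of_ne (hfeash ν q) hq
      linarith
end

section
/- Let (x^k), (λ^k), (μ^k) be the sequences generated by the augmented Lagrangian method (Algorithm 3.1) applied to the partially penalized GNEP, under Assumption 3.2 with ε_k → 0 and ε'_k → 0. Then every limit point (x̄, λ̄, μ̄) of the sequence of triples (x^k, λ^k, μ^k) is a KKT point of the GNEP; no constraint qualification is required. -/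
open Filter Topology Finset Function RealInnerProductSpace

/-- Auxiliary: continuous linear embedding of player `ν`'s block into the strategy space. -/
noncomputable def stmt16inj {N : ℕ} (n : Fin N → ℕ) (ν : Fin N) :
    EuclideanSpace ℝ (Fin (n ν)) →L[ℝ] Strat n :=
  { toLinearMap := LinearMap.single ℝ (fun μ => EuclideanSpace ℝ (Fin (n μ))) ν
    cont := by
      show Continuous ⇑(LinearMap.single ℝ (fun μ => EuclideanSpace ℝ (Fin (n μ))) ν)
      rw [LinearMap.coe_single]
      exact continuous_single (A := fun μ => EuclideanSpace ℝ (Fin (n μ))) ν }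

lemma stmt16inj_apply {N : ℕ} (n : Fin N → ℕ) (ν : Fin N) (z : EuclideanSpace ℝ (Fin (n ν))) :
    stmt16inj n ν z = Pi.single ν z :=
  LinearMap.single_apply (R := ℝ) (φ := fun μ => EuclideanSpace ℝ (Fin (n μ))) (i := ν) z

lemma stmt16update_eq {N : ℕ} {n : Fin N → ℕ} (ν : Fin N) (x : Strat n)
    (z : EuclideanSpace ℝ (Fin (n ν))) :
    Function.update x ν z = x + (stmt16inj n ν z - stmt16inj n ν (x ν)) := by
  funext μ
  by_cases hm : μ = ν
  · subst hm
    simp [stmt16inj_apply, Function.update_self]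
  · simp [stmt16inj_apply, Function.update_of_ne hm, Pi.single_eq_of_ne hm]

lemma stmt16pgrad_eq {N : ℕ} {n : Fin N → ℕ} (ν : Fin N) {f : Strat n → ℝ}
    (hf : ContDiff ℝ 1 f) (x : Strat n) :
    pgrad ν f x = (InnerProductSpace.toDual ℝ
      (EuclideanSpace ℝ (Fin (n ν)))).symm ((fderiv ℝ f x).comp (stmt16inj n ν)) := by
  have h2 : HasFDerivAt (fun z => Function.update x ν z) (stmt16inj n ν) (x ν) := by
    have he : (fun z : EuclideanSpace ℝ (Fin (n ν)) => Function.update x ν z)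
        = fun z => x + (stmt16inj n ν z - stmt16inj n ν (x ν)) := funext (stmt16update_eq ν x)
    rw [he]
    exact ((stmt16inj n ν).hasFDerivAt.sub_const _).const_add x
  have h1 : HasFDerivAt f (fderiv ℝ f x) (Function.update x ν (x ν)) := by
    rw [Function.update_eq_self]
    exact (hf.differentiable one_ne_zero x).hasFDerivAt
  have h3 : HasFDerivAt (fun z => f (Function.update x ν z))
      ((fderiv ℝ f x).comp (stmt16inj n ν)) (x ν) := h1.comp (x ν) h2
  unfold pgrad gradient
  rw [h3.fderiv]

lemma stmt16pgrad_cont {N : ℕ} {n : Fin N → ℕ} (ν : Fin N) {f : Strat n → ℝ}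
    (hf : ContDiff ℝ 1 f) : Continuous (pgrad ν f) := by
  have he : pgrad ν f = fun x => (InnerProductSpace.toDual ℝ
      (EuclideanSpace ℝ (Fin (n ν)))).symm ((fderiv ℝ f x).comp (stmt16inj n ν)) :=
    funext (stmt16pgrad_eq ν hf)
  rw [he]
  exact (InnerProductSpace.toDual ℝ _).symm.continuous.comp
    ((hf.continuous_fderiv one_ne_zero).clm_comp continuous_const)

lemma stmt16abs_le_sqrt_sum {ι : Type*} [Fintype ι] (a : ι → ℝ) (i : ι) :
    |a i| ≤ Real.sqrt (∑ j, a j ^ 2) := by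
  rw [← Real.sqrt_sq_eq_abs]
  exact Real.sqrt_le_sqrt (Finset.single_le_sum (fun j _ => sq_nonneg (a j)) (Finset.mem_univ i))

/-- Auxiliary: the residual norm used in the penalty-update test. -/
noncomputable def stmt16V {N : ℕ} {n m : Fin N → ℕ}
    (g : (ν : Fin N) → Fin (m ν) → Strat n → ℝ) (x : ℕ → Strat n)
    (lam : (k : ℕ) → (ν : Fin N) → Fin (m ν) → ℝ) (ν : Fin N) (k : ℕ) : ℝ :=
  Real.sqrt (∑ i, (min (-(g ν i (x k))) (lam k ν i)) ^ 2)


/-- **Theorem 4.8.** Every limit point of the sequence of triples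
`(x^k, λ^k, μ^k)` generated by the augmented Lagrangian method is a KKT point of the GNEP;
no constraint qualification is needed. -/
theorem stmt16 {N : ℕ} {n m p : Fin N → ℕ}
    (θ : Fin N → Strat n → ℝ)
    (g : (ν : Fin N) → Fin (m ν) → Strat n → ℝ)
    (h : (ν : Fin N) → Fin (p ν) → Strat n → ℝ)
    (hθ : ∀ ν, ContDiff ℝ 1 (θ ν))
    (hg : ∀ ν i, ContDiff ℝ 1 (g ν i))
    (hh : ∀ ν j, ContDiff ℝ 1 (h ν j))
    (x : ℕ → Strat n)
    (lam : (k : ℕ) → (ν : Fin N) → Fin (m ν) → ℝ)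
    (mu : (k : ℕ) → (ν : Fin N) → Fin (p ν) → ℝ)
    (u : (k : ℕ) → (ν : Fin N) → Fin (m ν) → ℝ)
    (rho : ℕ → Fin N → ℝ)
    (umax : ℝ) (τ γ : Fin N → ℝ)
    (humax : 0 ≤ umax)
    (hτ : ∀ ν, τ ν ∈ Set.Ioo (0:ℝ) 1)
    (hγ : ∀ ν, 1 < γ ν)
    (hrho0 : ∀ ν, 0 < rho 0 ν)
    (hu0 : ∀ ν i, u 0 ν i ∈ Set.Icc 0 umax)
    (hlam : ∀ k ν i, lam (k+1) ν i = max (u k ν i + rho k ν * g ν i (x (k+1))) 0)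
    (hu : ∀ k ν i, u (k+1) ν i = min (lam (k+1) ν i) umax)
    (hrho : ∀ k ν,
      (Real.sqrt (∑ i, (min (-(g ν i (x (k+1)))) (lam (k+1) ν i)) ^ 2) ≤
          τ ν * Real.sqrt (∑ i, (min (-(g ν i (x k))) (lam k ν i)) ^ 2) →
        rho (k+1) ν = rho k ν) ∧
      (¬ (Real.sqrt (∑ i, (min (-(g ν i (x (k+1)))) (lam (k+1) ν i)) ^ 2) ≤
          τ ν * Real.sqrt (∑ i, (min (-(g ν i (x k))) (lam k ν i)) ^ 2)) →
        rho (k+1) ν = γ ν * rho k ν))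
    (eps eps' : ℕ → ℝ)
    (heps0 : ∀ k, 0 ≤ eps k)
    (heps'0 : ∀ k, 0 ≤ eps' k)
    (heps' : Tendsto eps' atTop (𝓝 0))
    (hA1 : ∀ k ν, ‖pgrad ν (θ ν) (x (k+1))
        + ∑ i, max (u k ν i + rho k ν * g ν i (x (k+1))) 0 • pgrad ν (g ν i) (x (k+1))
        + ∑ j, mu (k+1) ν j • pgrad ν (h ν j) (x (k+1))‖ ≤ eps k)
    (hA2 : ∀ k ν, Real.sqrt (∑ j, (min (-(h ν j (x (k+1)))) (mu (k+1) ν j)) ^ 2) ≤ eps' k)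
    (heps : Tendsto eps atTop (𝓝 0))
    (xbar : Strat n)
    (lambar : (ν : Fin N) → Fin (m ν) → ℝ) (mubar : (ν : Fin N) → Fin (p ν) → ℝ)
    (hclus : MapClusterPt (xbar, lambar, mubar) atTop (fun k => (x k, lam k, mu k))) :
    ∀ ν, (pgrad ν (θ ν) xbar + ∑ i, lambar ν i • pgrad ν (g ν i) xbar
        + ∑ j, mubar ν j • pgrad ν (h ν j) xbar = 0) ∧
      (∀ i, min (-(g ν i xbar)) (lambar ν i) = 0) ∧
      (∀ j, min (-(h ν j xbar)) (mubar ν j) = 0) := by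
  classical
  obtain ⟨ψ, hψ, hten⟩ := TopologicalSpace.FirstCountableTopology.tendsto_subseq hclus
  have hxt : Tendsto (fun j => x (ψ j)) atTop (𝓝 xbar) :=
    (continuous_fst.tendsto _).comp hten
  have hlt : Tendsto (fun j => lam (ψ j)) atTop (𝓝 lambar) :=
    ((continuous_fst.comp continuous_snd).tendsto _).comp hten
  have hmt : Tendsto (fun j => mu (ψ j)) atTop (𝓝 mubar) :=
    ((continuous_snd.comp continuous_snd).tendsto _).comp hten
  set K : ℕ → ℕ := fun j => ψ (j + 1) with hKdef
  have hK1 : ∀ j, K j - 1 + 1 = K j := fun j =>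
    Nat.succ_pred_eq_of_pos (lt_of_lt_of_le (Nat.succ_pos j) hψ.le_apply)
  have hKtend : Tendsto (fun j => K j - 1) atTop atTop :=
    (tendsto_sub_atTop_nat 1).comp (hψ.tendsto_atTop.comp (tendsto_add_atTop_nat 1))
  have hxK : Tendsto (fun j => x (K j)) atTop (𝓝 xbar) := hxt.comp (tendsto_add_atTop_nat 1)
  have hlamK : ∀ ν i, Tendsto (fun j => lam (K j) ν i) atTop (𝓝 (lambar ν i)) := fun ν i =>
    (((hlt.comp (tendsto_add_atTop_nat 1)).apply_nhds ν).apply_nhds i)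
  have hmuK : ∀ ν j0, Tendsto (fun j => mu (K j) ν j0) atTop (𝓝 (mubar ν j0)) := fun ν j0 =>
    (((hmt.comp (tendsto_add_atTop_nat 1)).apply_nhds ν).apply_nhds j0)
  have hgK : ∀ ν i, Tendsto (fun j => g ν i (x (K j))) atTop (𝓝 (g ν i xbar)) := fun ν i =>
    ((hg ν i).continuous.tendsto xbar).comp hxK
  have hhK : ∀ ν j0, Tendsto (fun j => h ν j0 (x (K j))) atTop (𝓝 (h ν j0 xbar)) := fun ν j0 =>
    ((hh ν j0).continuous.tendsto xbar).comp hxK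
  have hepsK : Tendsto (fun j => eps (K j - 1)) atTop (𝓝 0) := heps.comp hKtend
  have heps'K : Tendsto (fun j => eps' (K j - 1)) atTop (𝓝 0) := heps'.comp hKtend
  have hrho' : ∀ k ν,
      (stmt16V g x lam ν (k+1) ≤ τ ν * stmt16V g x lam ν k → rho (k+1) ν = rho k ν) ∧
      (¬ (stmt16V g x lam ν (k+1) ≤ τ ν * stmt16V g x lam ν k) →
        rho (k+1) ν = γ ν * rho k ν) := hrho
  have hlam_nonneg : ∀ k ν i, 0 ≤ lam (k+1) ν i := fun k ν i => by
    rw [hlam]; exact le_max_right _ _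
  have hu_mem : ∀ k ν i, u k ν i ∈ Set.Icc 0 umax := by
    intro k
    induction k with
    | zero => exact hu0
    | succ k _ =>
      intro ν i
      rw [hu]
      exact ⟨le_min (hlam_nonneg k ν i) humax, min_le_right _ _⟩
  have hrho_pos : ∀ ν k, 0 < rho k ν := by
    intro ν k
    induction k with
    | zero => exact hrho0 ν
    | succ k ih =>
      by_cases hc : stmt16V g x lam ν (k+1) ≤ τ ν * stmt16V g x lam ν k
      · rw [(hrho' k ν).1 hc]; exact ih
      · rw [(hrho' k ν).2 hc]; exact mul_pos (lt_trans one_pos (hγ ν)) ih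
  have hrho_mono : ∀ ν, Monotone fun k => rho k ν := by
    intro ν
    apply monotone_nat_of_le_succ
    intro k
    by_cases hc : stmt16V g x lam ν (k+1) ≤ τ ν * stmt16V g x lam ν k
    · rw [(hrho' k ν).1 hc]
    · rw [(hrho' k ν).2 hc]
      exact le_mul_of_one_le_left (hrho_pos ν k).le (hγ ν).le
  intro ν
  refine ⟨?_, ?_, ?_⟩
  · -- stationarity
    have hFt : Tendsto (fun j => pgrad ν (θ ν) (x (K j))
        + ∑ i, lam (K j) ν i • pgrad ν (g ν i) (x (K j))
        + ∑ j0, mu (K j) ν j0 • pgrad ν (h ν j0) (x (K j))) atTop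
        (𝓝 (pgrad ν (θ ν) xbar + ∑ i, lambar ν i • pgrad ν (g ν i) xbar
          + ∑ j0, mubar ν j0 • pgrad ν (h ν j0) xbar)) := by
      refine Tendsto.add (Tendsto.add ?_ ?_) ?_
      · exact ((stmt16pgrad_cont ν (hθ ν)).tendsto xbar).comp hxK
      · exact tendsto_finset_sum _ fun i _ =>
          (hlamK ν i).smul (((stmt16pgrad_cont ν (hg ν i)).tendsto xbar).comp hxK)
      · exact tendsto_finset_sum _ fun j0 _ =>
          (hmuK ν j0).smul (((stmt16pgrad_cont ν (hh ν j0)).tendsto xbar).comp hxK)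
    have hFb : ∀ j, ‖pgrad ν (θ ν) (x (K j))
        + ∑ i, lam (K j) ν i • pgrad ν (g ν i) (x (K j))
        + ∑ j0, mu (K j) ν j0 • pgrad ν (h ν j0) (x (K j))‖ ≤ eps (K j - 1) := by
      intro j
      have h1 := hA1 (K j - 1) ν
      rw [hK1 j] at h1
      have hl : ∀ i, lam (K j) ν i
          = max (u (K j - 1) ν i + rho (K j - 1) ν * g ν i (x (K j))) 0 := by
        intro i
        have h2 := hlam (K j - 1) ν i
        rwa [hK1 j] at h2
      simp only [← hl] at h1
      exact h1
    have hF0 : Tendsto (fun j => pgrad ν (θ ν) (x (K j))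
        + ∑ i, lam (K j) ν i • pgrad ν (g ν i) (x (K j))
        + ∑ j0, mu (K j) ν j0 • pgrad ν (h ν j0) (x (K j))) atTop (𝓝 0) :=
      squeeze_zero_norm hFb hepsK
    exact tendsto_nhds_unique hFt hF0
  · -- complementarity for g
    intro i
    have hmin : Tendsto (fun j => min (-(g ν i (x (K j)))) (lam (K j) ν i)) atTop
        (𝓝 (min (-(g ν i xbar)) (lambar ν i))) := ((hgK ν i).neg).min (hlamK ν i)
    by_cases hev : ∀ᶠ k in atTop, stmt16V g x lam ν (k+1) ≤ τ ν * stmt16V g x lam ν k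
    · -- bounded-penalty case: the residual tends to zero
      obtain ⟨Kc, hKc⟩ := eventually_atTop.mp hev
      have hVdec : ∀ jj, stmt16V g x lam ν (jj + Kc) ≤ stmt16V g x lam ν Kc * τ ν ^ jj := by
        intro jj
        induction jj with
        | zero => simp
        | succ jj ih =>
          have heq : jj + 1 + Kc = (jj + Kc) + 1 := by omega
          rw [heq]
          calc stmt16V g x lam ν ((jj + Kc) + 1)
              ≤ τ ν * stmt16V g x lam ν (jj + Kc) := hKc (jj + Kc) (Nat.le_add_left _ _)
            _ ≤ τ ν * (stmt16V g x lam ν Kc * τ ν ^ jj) :=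
                mul_le_mul_of_nonneg_left ih (hτ ν).1.le
            _ = stmt16V g x lam ν Kc * τ ν ^ (jj + 1) := by ring
      have hV0 : Tendsto (fun k => stmt16V g x lam ν k) atTop (𝓝 0) := by
        rw [← tendsto_add_atTop_iff_nat Kc]
        have hlim : Tendsto (fun jj => stmt16V g x lam ν Kc * τ ν ^ jj) atTop (𝓝 0) := by
          have h4 := (tendsto_pow_atTop_nhds_zero_of_lt_one (hτ ν).1.le (hτ ν).2).const_mul
            (stmt16V g x lam ν Kc)
          rwa [mul_zero] at h4
        exact squeeze_zero (fun jj => Real.sqrt_nonneg _) hVdec hlim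
      have hVK : Tendsto (fun j => stmt16V g x lam ν (K j)) atTop (𝓝 0) :=
        hV0.comp (hψ.tendsto_atTop.comp (tendsto_add_atTop_nat 1))
      have hmin0 : Tendsto (fun j => min (-(g ν i (x (K j)))) (lam (K j) ν i)) atTop (𝓝 0) := by
        apply squeeze_zero_norm (fun j => ?_) hVK
        exact stmt16abs_le_sqrt_sum (fun i' => min (-(g ν i' (x (K j)))) (lam (K j) ν i')) i
      exact tendsto_nhds_unique hmin hmin0
    · -- unbounded-penalty case
      have hfreq := Filter.not_eventually.mp hev
      have hgrow : ∀ jc : ℕ, ∃ k, γ ν ^ jc * rho 0 ν ≤ rho k ν := by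
        intro jc
        induction jc with
        | zero => exact ⟨0, by simp⟩
        | succ jc ih =>
          obtain ⟨k, hk⟩ := ih
          obtain ⟨k', hk', hT⟩ := frequently_atTop.mp hfreq k
          refine ⟨k' + 1, ?_⟩
          rw [(hrho' k' ν).2 hT]
          have hγ0 : (0:ℝ) ≤ γ ν := le_of_lt (lt_trans one_pos (hγ ν))
          calc γ ν ^ (jc + 1) * rho 0 ν = γ ν * (γ ν ^ jc * rho 0 ν) := by ring
            _ ≤ γ ν * rho k ν := mul_le_mul_of_nonneg_left hk hγ0
            _ ≤ γ ν * rho k' ν := mul_le_mul_of_nonneg_left (hrho_mono ν hk') hγ0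
      have htop : Tendsto (fun k => rho k ν) atTop atTop := by
        rw [tendsto_atTop]
        intro C
        obtain ⟨jc, hjc⟩ := (((tendsto_pow_atTop_atTop_of_one_lt (hγ ν)).atTop_mul_const
          (hrho0 ν)).eventually_ge_atTop C).exists
        obtain ⟨k0, hk0⟩ := hgrow jc
        exact eventually_atTop.mpr ⟨k0, fun k hk => le_trans hjc (le_trans hk0 (hrho_mono ν hk))⟩
      have hrhoKtop : Tendsto (fun j => rho (K j - 1) ν) atTop atTop := htop.comp hKtend
      rcases lt_trichotomy (g ν i xbar) 0 with hneg | hzero | hpos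
      · -- g < 0 at the limit: multiplier vanishes
        have hgev : ∀ᶠ j in atTop, g ν i (x (K j)) < g ν i xbar / 2 :=
          (hgK ν i).eventually_lt_const (by linarith)
        have hrev : ∀ᶠ j in atTop, umax ≤ rho (K j - 1) ν * (-(g ν i xbar) / 2) :=
          (hrhoKtop.atTop_mul_const (by linarith : (0:ℝ) < -(g ν i xbar) / 2)).eventually_ge_atTop
            umax
        have hlam0 : ∀ᶠ j in atTop, lam (K j) ν i = 0 := by
          filter_upwards [hgev, hrev] with j h1 h2
          have hl := hlam (K j - 1) ν i
          rw [hK1 j] at hl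
          rw [hl]
          apply max_eq_right
          have hub := (hu_mem (K j - 1) ν i).2
          have hrp := (hrho_pos ν (K j - 1)).le
          have hmul : rho (K j - 1) ν * g ν i (x (K j))
              ≤ rho (K j - 1) ν * (g ν i xbar / 2) :=
            mul_le_mul_of_nonneg_left h1.le hrp
          nlinarith
        have hlb : lambar ν i = 0 :=
          tendsto_nhds_unique (hlamK ν i)
            (tendsto_const_nhds.congr' (hlam0.mono fun j hj => hj.symm))
        rw [hlb]
        exact min_eq_right (by linarith)
      · -- g = 0 at the limit
        have hlnn : 0 ≤ lambar ν i := by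
          refine ge_of_tendsto (hlamK ν i) (Eventually.of_forall fun j => ?_)
          have h5 := hlam_nonneg (K j - 1) ν i
          rwa [hK1 j] at h5
        rw [hzero, neg_zero]
        exact min_eq_left hlnn
      · -- g > 0 at the limit: impossible
        exfalso
        have hgev : ∀ᶠ j in atTop, g ν i xbar / 2 < g ν i (x (K j)) :=
          (hgK ν i).eventually_const_lt (by linarith)
        have hbig : Tendsto (fun j => rho (K j - 1) ν * (g ν i xbar / 2)) atTop atTop :=
          hrhoKtop.atTop_mul_const (by linarith)
        have hlamtop : Tendsto (fun j => lam (K j) ν i) atTop atTop := by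
          apply tendsto_atTop_mono' atTop ?_ hbig
          filter_upwards [hgev] with j h1
          have hl := hlam (K j - 1) ν i
          rw [hK1 j] at hl
          rw [hl]
          have hmul : rho (K j - 1) ν * (g ν i xbar / 2)
              ≤ rho (K j - 1) ν * g ν i (x (K j)) :=
            mul_le_mul_of_nonneg_left h1.le (hrho_pos ν (K j - 1)).le
          have hun := (hu_mem (K j - 1) ν i).1
          exact le_trans (by linarith) (le_max_left _ _)
        exact not_tendsto_atTop_of_tendsto_nhds (hlamK ν i) hlamtop
  · -- complementarity for h
    intro j0
    have hmin : Tendsto (fun j => min (-(h ν j0 (x (K j)))) (mu (K j) ν j0)) atTop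
        (𝓝 (min (-(h ν j0 xbar)) (mubar ν j0))) := ((hhK ν j0).neg).min (hmuK ν j0)
    have hmin0 : Tendsto (fun j => min (-(h ν j0 (x (K j)))) (mu (K j) ν j0)) atTop (𝓝 0) := by
      apply squeeze_zero_norm (fun j => ?_) heps'K
      refine le_trans
        (stmt16abs_le_sqrt_sum (fun j1 => min (-(h ν j1 (x (K j)))) (mu (K j) ν j1)) j0) ?_
      have h2 := hA2 (K j - 1) ν
      rwa [hK1 j] at h2
    exact tendsto_nhds_unique hmin hmin0
end
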